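/- For a weight-balanced loop-less Laplacian L of a strongly connected directed graph and γ ≠ 0, the Moore–Penrose pseudoinverse satisfies L† = (L + (γ/n) J)^{-1} − (1/(nγ)) J, where J is the all-ones n×n matrix. -/

import Mathlib

open Matrix

/-- `X` is the Moore–Penrose pseudoinverse of `A` (the four Penrose conditions). -/
def IsMoorePenrose {m n : Type*} [Fintype m] [Fintype n]
    (A : Matrix m n ℝ) (X : Matrix n m ℝ) : Prop :=
  A * X * A = A ∧ X * A * X = X ∧ (A * X)ᵀ = A * X ∧ (X * A)ᵀ = X * A

section Aux

variable {n : ℕ}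

/-- The sum-of-coordinates functional. -/
noncomputable def sumFun (n : ℕ) : (Fin n → ℝ) →ₗ[ℝ] ℝ where
  toFun v := ∑ i, v i
  map_add' v w := by simp [Finset.sum_add_distrib]
  map_smul' c v := by simp [Finset.mul_sum]

lemma sum_mulVec (L : Matrix (Fin n) (Fin n) ℝ) (hcol : Matrix.vecMul 1 L = 0)
    (x : Fin n → ℝ) : ∑ i, L.mulVec x i = 0 := by
  have hc : ∀ j, ∑ i, L i j = 0 := by
    intro j
    have := congrFun hcol j
    simpa [Matrix.vecMul, dotProduct] using this
  calc ∑ i, L.mulVec x i = ∑ j, (∑ i, L i j) * x j := by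
        simp only [Matrix.mulVec, dotProduct]
        rw [Finset.sum_comm]
        simp [Finset.sum_mul]
    _ = 0 := by simp [hc]

lemma LX_eq (hn : 0 < n) (L X : Matrix (Fin n) (Fin n) ℝ)
    (hrow : L.mulVec 1 = 0) (hcol : Matrix.vecMul 1 L = 0)
    (hrank : L.rank = n - 1) (p1 : L * X * L = L) (hX1 : X.mulVec 1 = 0) :
    L * X = 1 - ((n : ℝ))⁻¹ • (Matrix.of fun _ _ => (1 : ℝ)) := by
  have hn' : ((n : ℝ)) ≠ 0 := Nat.cast_ne_zero.mpr hn.ne'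
  -- the kernel of the sum functional
  have hfsurj : Function.Surjective (sumFun n) := by
    intro c
    refine ⟨Pi.single ⟨0, hn⟩ c, ?_⟩
    simp [sumFun]
  have hker : Module.finrank ℝ (LinearMap.ker (sumFun n)) = n - 1 := by
    have h := LinearMap.finrank_range_add_finrank_ker (sumFun n)
    rw [LinearMap.range_eq_top.mpr hfsurj] at h
    simp [Module.finrank_self, Module.finrank_pi] at h
    omega
  have hle : LinearMap.range L.mulVecLin ≤ LinearMap.ker (sumFun n) := by
    rintro _ ⟨x, rfl⟩
    simp only [LinearMap.mem_ker, Matrix.mulVecLin_apply]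
    exact sum_mulVec L hcol x
  have hW : LinearMap.range L.mulVecLin = LinearMap.ker (sumFun n) := by
    apply Submodule.eq_of_le_of_finrank_eq hle
    rw [hker]
    exact hrank
  -- now prove equality of matrices via action on vectors
  apply Matrix.toLin'.injective
  apply LinearMap.ext
  intro v
  simp only [Matrix.toLin'_apply]
  set s : ℝ := ∑ i, v i with hs
  set v' : Fin n → ℝ := v - (s / n) • 1 with hv'
  have hv'mem : v' ∈ LinearMap.range L.mulVecLin := by
    rw [hW]
    simp only [LinearMap.mem_ker, sumFun, LinearMap.coe_mk, AddHom.coe_mk]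
    simp [hv', Finset.sum_sub_distrib, ← hs]
    field_simp
    simp
  obtain ⟨w, hw⟩ := hv'mem
  rw [Matrix.mulVecLin_apply] at hw
  have hLX1 : (L * X).mulVec 1 = 0 := by
    rw [← Matrix.mulVec_mulVec, hX1, Matrix.mulVec_zero]
  have hLXv' : (L * X).mulVec v' = v' := by
    rw [← hw, Matrix.mulVec_mulVec, p1]
  have hvdecomp : v = v' + (s / n) • 1 := by simp [hv']
  have hJv : ((Matrix.of fun _ _ => (1 : ℝ)) : Matrix (Fin n) (Fin n) ℝ).mulVec v = s • (1 : Fin n → ℝ) := by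
    funext i
    simp [Matrix.mulVec, dotProduct, hs]
  calc (L * X).mulVec v = (L * X).mulVec v' + (s / n) • (L * X).mulVec 1 := by
        conv_lhs => rw [hvdecomp]
        rw [Matrix.mulVec_add, Matrix.mulVec_smul]
    _ = v' := by rw [hLX1, hLXv', smul_zero, add_zero]
    _ = (1 - ((n : ℝ))⁻¹ • (Matrix.of fun _ _ => (1 : ℝ))).mulVec v := by
        rw [Matrix.sub_mulVec, Matrix.one_mulVec, Matrix.smul_mulVec, hJv]
        rw [hv', smul_smul]
        congr 1
        rw [div_eq_mul_inv, mul_comm]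

end Aux

/-- For a weight-balanced loop-less Laplacian of a strongly connected directed graph and `γ ≠ 0`,
the Moore–Penrose pseudoinverse satisfies `L† = (L + (γ/n)J)⁻¹ - (1/(nγ))J`. -/
theorem pinv_eq_shifted_inverse {n : ℕ} (L X : Matrix (Fin n) (Fin n) ℝ)
    (hrow : L.mulVec 1 = 0) (hcol : Matrix.vecMul 1 L = 0)
    (hrank : L.rank = n - 1) (hX : IsMoorePenrose L X) (γ : ℝ) (hγ : γ ≠ 0) :
    X = (L + (γ / (n : ℝ)) • (Matrix.of fun _ _ => (1 : ℝ)))⁻¹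
        - (1 / ((n : ℝ) * γ)) • (Matrix.of fun _ _ => (1 : ℝ)) := by
  rcases Nat.eq_zero_or_pos n with h0 | hn
  · subst h0; ext i j; exact i.elim0
  have hn' : ((n : ℝ)) ≠ 0 := Nat.cast_ne_zero.mpr hn.ne'
  obtain ⟨p1, p2, p3, p4⟩ := hX
  set J : Matrix (Fin n) (Fin n) ℝ := Matrix.of fun _ _ => (1 : ℝ) with hJ
  have hJt : Jᵀ = J := by ext i j; simp [hJ]
  have hLJ : L * J = 0 := by
    ext i j
    have := congrFun hrow i
    simp only [Matrix.mulVec, dotProduct, Pi.one_apply, mul_one, Pi.zero_apply] at this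
    simp [Matrix.mul_apply, hJ, this]
  have hJL : J * L = 0 := by
    ext i j
    have := congrFun hcol j
    simp only [Matrix.vecMul, dotProduct, Pi.one_apply, one_mul, Pi.zero_apply] at this
    simp [Matrix.mul_apply, hJ, this]
  have hJJ : J * J = (n : ℝ) • J := by
    ext i j
    simp [Matrix.mul_apply, hJ]
  have hLtJ : Lᵀ * J = 0 := by
    have := congrArg Matrix.transpose hJL
    simpa [Matrix.transpose_mul, hJt] using this
  have hJLt : J * Lᵀ = 0 := by
    have := congrArg Matrix.transpose hLJ
    simpa [Matrix.transpose_mul, hJt] using this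
  have hLXJ : L * (X * J) = 0 := by
    have h : (L * X) * J = 0 := by
      rw [← p3, Matrix.transpose_mul, Matrix.mul_assoc, hLtJ, Matrix.mul_zero]
    rwa [Matrix.mul_assoc] at h
  have hXJ : X * J = 0 := by
    conv_lhs => rw [← p2]
    simp only [Matrix.mul_assoc, hLXJ, Matrix.mul_zero]
  have hJXL : (J * X) * L = 0 := by
    have h : J * (X * L) = 0 := by
      rw [← p4, Matrix.transpose_mul, ← Matrix.mul_assoc, hJLt, Matrix.zero_mul]
    rwa [← Matrix.mul_assoc] at h
  have hJX : J * X = 0 := by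
    conv_lhs => rw [← p2]
    calc J * (X * L * X) = ((J * X) * L) * X := by simp only [Matrix.mul_assoc]
      _ = 0 := by rw [hJXL, Matrix.zero_mul]
  have hX1 : X.mulVec 1 = 0 := by
    funext i
    have := congrFun (congrFun hXJ i) i
    simpa [Matrix.mul_apply, hJ, Matrix.mulVec, dotProduct] using this
  have hLX : L * X = 1 - ((n : ℝ))⁻¹ • J := LX_eq hn L X hrow hcol hrank p1 hX1
  have hMY : (L + (γ / (n : ℝ)) • J) * (X + (1 / ((n : ℝ) * γ)) • J) = 1 := by
    rw [Matrix.add_mul, Matrix.mul_add, Matrix.mul_add, Matrix.smul_mul, Matrix.smul_mul,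
      Matrix.mul_smul, Matrix.mul_smul, hLJ, hJX, hJJ, hLX]
    rw [smul_smul, smul_smul]
    have hc : γ / (n : ℝ) * (1 / ((n : ℝ) * γ)) * (n : ℝ) = ((n : ℝ))⁻¹ := by
      field_simp
    rw [hc]
    simp only [smul_zero, add_zero, zero_add]
    rw [sub_add_cancel]
  rw [Matrix.inv_eq_right_inv hMY, add_sub_cancel_right]
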